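/- Let λ > 0, p* > 0, V_∞ ∈ (0,1), C > 0, and set α := 2(1+p*)V_∞/λ, β := 2(1+p*)(1−V_∞)/λ. Define f(v) := C·v^{α−1}(1−v)^{β−1} for v ∈ (0,1). Then f is differentiable on (0,1) and for every v ∈ (0,1): (λ/2)·d/dv[v(1−v)·f(v)] = (1+p*)·(V_∞ − v)·f(v). In other words, f is a stationary solution of the controlled Fokker–Planck equation whose drift is (1+p*)(V_∞ − v). -/

import Mathlib

open Real

/-- The beta-type density `f(v) = C v^{α−1}(1−v)^{β−1}` with `α = 2(1+p*)V_∞/λ`,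
`β = 2(1+p*)(1−V_∞)/λ`, `λ > 0`, `p* > 0`, `V_∞ ∈ (0,1)`, `C > 0`, is differentiable
on `(0,1)` and satisfies the controlled stationary Fokker–Planck equation
`(λ/2) d/dv[v(1−v)f(v)] = (1+p*)(V_∞ − v)f(v)` on `(0,1)`. -/
theorem controlled_beta_density_stationary_FokkerPlanck
    (lam pstar Vinf C : ℝ) (hlam : 0 < lam) (hp : 0 < pstar)
    (hV : Vinf ∈ Set.Ioo (0:ℝ) 1) (hC : 0 < C)
    (f : ℝ → ℝ)
    (hf : ∀ v, f v =
      C * v ^ (2 * (1 + pstar) * Vinf / lam - 1)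
        * (1 - v) ^ (2 * (1 + pstar) * (1 - Vinf) / lam - 1)) :
    DifferentiableOn ℝ f (Set.Ioo 0 1) ∧
    ∀ v ∈ Set.Ioo (0:ℝ) 1,
      lam / 2 * deriv (fun w => w * (1 - w) * f w) v
        = (1 + pstar) * ((Vinf - v) * f v) := by
  set α := 2 * (1 + pstar) * Vinf / lam with hα
  set β := 2 * (1 + pstar) * (1 - Vinf) / lam with hβ
  constructor
  · intro v hv
    have hv0 : v ≠ 0 := ne_of_gt hv.1
    have hv1 : (1 : ℝ) - v ≠ 0 := by have := hv.2; linarith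
    have h1 : DifferentiableAt ℝ (fun w : ℝ => w ^ (α - 1)) v :=
      (differentiableAt_fun_id).rpow_const (Or.inl hv0)
    have h2 : DifferentiableAt ℝ (fun w : ℝ => (1 - w) ^ (β - 1)) v :=
      ((differentiableAt_const (1:ℝ)).sub differentiableAt_fun_id).rpow_const (Or.inl hv1)
    have : DifferentiableAt ℝ f v := by
      have : DifferentiableAt ℝ
          (fun w : ℝ => C * w ^ (α - 1) * (1 - w) ^ (β - 1)) v :=
        ((differentiableAt_const C).mul h1).mul h2
      exact this.congr_of_eventuallyEq (Filter.Eventually.of_forall fun w => hf w)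
    exact this.differentiableWithinAt
  · intro v hv
    have hv0 : (0:ℝ) < v := hv.1
    have hv1 : (0:ℝ) < 1 - v := by have := hv.2; linarith
    have hA0 : α ≠ 0 := ne_of_gt (div_pos (by nlinarith [hV.1]) hlam)
    have hB0 : β ≠ 0 := ne_of_gt (div_pos (by nlinarith [hV.2]) hlam)
    -- the product w*(1-w)*f w equals G w = C * w^α * (1-w)^β near v
    have hEq : (fun w : ℝ => w * (1 - w) * f w) =ᶠ[nhds v]
        (fun w : ℝ => C * w ^ α * (1 - w) ^ β) := by
      have hmem : Set.Ioo (0:ℝ) 1 ∈ nhds v := (isOpen_Ioo).mem_nhds hv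
      filter_upwards [hmem] with w hw
      have hw0 : (0:ℝ) < w := hw.1
      have hw1 : (0:ℝ) < 1 - w := by have := hw.2; linarith
      rw [hf w]
      have e1 : w ^ α = w * w ^ (α - 1) := by
        rw [← Real.rpow_one_add' (le_of_lt hw0)]
        · ring_nf
        · simpa using hA0
      have e2 : (1 - w) ^ β = (1 - w) * (1 - w) ^ (β - 1) := by
        rw [← Real.rpow_one_add' (le_of_lt hw1)]
        · ring_nf
        · simpa using hB0
      rw [e1, e2]; ring
    rw [hEq.deriv_eq]
    have h1 : HasDerivAt (fun w : ℝ => w ^ α) (α * v ^ (α - 1)) v := by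
      simpa using Real.hasDerivAt_rpow_const (p := α) (Or.inl (ne_of_gt hv0))
    have h2 : HasDerivAt (fun w : ℝ => (1 - w) ^ β) (β * (1 - v) ^ (β - 1) * (-1)) v := by
      have hinner : HasDerivAt (fun w : ℝ => 1 - w) (-1) v := by
        simpa using (hasDerivAt_id v).const_sub (1:ℝ)
      exact (Real.hasDerivAt_rpow_const (x := 1 - v) (p := β)
        (Or.inl (ne_of_gt hv1))).comp v hinner
    have hG : HasDerivAt (fun w : ℝ => C * w ^ α * (1 - w) ^ β)
        ((C * (α * v ^ (α - 1))) * (1 - v) ^ β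
          + (C * v ^ α) * (β * (1 - v) ^ (β - 1) * (-1))) v :=
      ((h1.const_mul C).mul h2)
    rw [hG.deriv]
    have e1 : v ^ α = v * v ^ (α - 1) := by
      rw [← Real.rpow_one_add' (le_of_lt hv0)]
      · ring_nf
      · simpa using hA0
    have e2 : (1 - v) ^ β = (1 - v) * (1 - v) ^ (β - 1) := by
      rw [← Real.rpow_one_add' (le_of_lt hv1)]
      · ring_nf
      · simpa using hB0
    have hal : lam * α = 2 * (1 + pstar) * Vinf := by
      rw [hα]; field_simp [hlam.ne']
    have hbl : lam * β = 2 * (1 + pstar) * (1 - Vinf) := by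
      rw [hβ]; field_simp [hlam.ne']
    rw [hf v, e1, e2]
    linear_combination (C * v ^ (α - 1) * (1 - v) ^ (β - 1) * (1 - v) / 2) * hal
      - (C * v ^ (α - 1) * (1 - v) ^ (β - 1) * v / 2) * hbl
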